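/- Let I be a nonempty open real interval and let f : I → ℝ be a three times differentiable function whose first derivative does not vanish on I. Then S(f) = 0 holds on I if and only if there exist four constants a,b,c,d ∈ ℝ with ad ≠ bc and 0 ∉ cI+d (i.e., cx+d ≠ 0 for all x ∈ I) such that f(x) = (ax+b)/(cx+d) for all x ∈ I. -/

import Mathlib

open Set

/-- The Schwarzian derivative `S(f) = f'''/f' - (3/2) (f''/f')²`. -/
noncomputable def schwarzian (f : ℝ → ℝ) (x : ℝ) : ℝ :=
  deriv (deriv (deriv f)) x / deriv f x - 3 / 2 * (deriv (deriv f) x / deriv f x) ^ 2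

lemma constOn {I : Set ℝ} (hIopen : IsOpen I) (hIconn : I.OrdConnected) {φ : ℝ → ℝ}
    (h : ∀ x ∈ I, HasDerivAt φ 0 x) : ∀ x ∈ I, ∀ y ∈ I, φ x = φ y := by
  intro x hx y hy
  have hconv : Convex ℝ I := convex_iff_ordConnected.mpr hIconn
  refine hconv.is_const_of_fderivWithin_eq_zero
    (fun z hz => ((h z hz).differentiableAt).differentiableWithinAt) (fun z hz => ?_) hx hy
  rw [fderivWithin_of_isOpen hIopen hz]
  have := (h z hz).hasFDerivAt.fderiv
  rw [this]; ext; simp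

lemma schwarzian_mobius (I : Set ℝ) (hIopen : IsOpen I) (hIne : I.Nonempty)
    (hIconn : I.OrdConnected) (f : ℝ → ℝ)
    (hf2 : ∀ x ∈ I, DifferentiableAt ℝ (deriv f) x)
    (hf3 : ∀ x ∈ I, DifferentiableAt ℝ (deriv (deriv f)) x)
    (hf' : ∀ x ∈ I, deriv f x ≠ 0)
    (hS : ∀ x ∈ I, schwarzian f x = 0) :
    (∃ a b c d : ℝ, a * d ≠ b * c ∧ (∀ x ∈ I, c * x + d ≠ 0) ∧
      ∀ x ∈ I, f x = (a * x + b) / (c * x + d)) := by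
  obtain ⟨x₀, hx₀⟩ := hIne
  set f1 := deriv f with hf1d
  set f2 := deriv f1 with hf2d
  set f3 := deriv f2 with hf3d
  have hcont : ContinuousOn f1 I := fun x hx => ((hf2 x hx).continuousAt).continuousWithinAt
  -- constant sign
  have hsign : ∃ s : ℝ, s ^ 2 = 1 ∧ ∀ x ∈ I, 0 < s * f1 x := by
    have key : ∀ x ∈ I, ∀ y ∈ I, f1 x < 0 → 0 < f1 y → False := by
      intro x hx y hy hxneg hypos
      rcases le_total x y with hxy | hxy
      · have hsub : Icc x y ⊆ I := hIconn.out hx hy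
        have := intermediate_value_Icc hxy (hcont.mono hsub)
        have h0 : (0:ℝ) ∈ Icc (f1 x) (f1 y) := ⟨hxneg.le, hypos.le⟩
        obtain ⟨z, hz, hz0⟩ := this h0
        exact hf' z (hsub hz) hz0
      · have hsub : Icc y x ⊆ I := hIconn.out hy hx
        have := intermediate_value_Icc' hxy (hcont.mono hsub)
        have h0 : (0:ℝ) ∈ Icc (f1 x) (f1 y) := ⟨hxneg.le, hypos.le⟩
        obtain ⟨z, hz, hz0⟩ := this h0
        exact hf' z (hsub hz) hz0
    rcases lt_or_gt_of_ne (hf' x₀ hx₀) with h | h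
    · refine ⟨-1, by norm_num, fun x hx => ?_⟩
      rcases lt_or_gt_of_ne (hf' x hx) with h' | h'
      · nlinarith
      · exact (key x₀ hx₀ x hx h h').elim
    · refine ⟨1, by norm_num, fun x hx => ?_⟩
      rcases lt_or_gt_of_ne (hf' x hx) with h' | h'
      · exact (key x hx x₀ hx₀ h' h).elim
      · nlinarith
  obtain ⟨s, hs2, hspos⟩ := hsign
  -- ODE relation from S = 0
  have hODE : ∀ x ∈ I, f3 x * f1 x = 3 / 2 * f2 x ^ 2 := by
    intro x hx
    have := hS x hx
    rw [schwarzian] at this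
    have h1 := hf' x hx
    field_simp at this
    have h2 : f1 x * (2 * (f3 x * f1 x) - 3 * f2 x ^ 2) = 0 := by
      have h1' : deriv f x ≠ 0 := h1
      rw [div_eq_iff (pow_ne_zero 2 h1')] at this
      linear_combination f1 x * this
    rcases mul_eq_zero.mp h2 with h3 | h3
    · exact (h1 h3).elim
    · linarith
  set g : ℝ → ℝ := fun x => (s * f1 x) ^ (-(1/2) : ℝ) with hg
  set g1 : ℝ → ℝ := fun x => s * f2 x * (-(1/2)) * (s * f1 x) ^ (-(3/2) : ℝ) with hg1
  have hDg : ∀ x ∈ I, HasDerivAt g (g1 x) x := by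
    intro x hx
    have h1 : HasDerivAt (fun y => s * f1 y) (s * f2 x) x := (hf2 x hx).hasDerivAt.const_mul s
    have h2 := h1.rpow_const (p := -(1/2)) (Or.inl (hspos x hx).ne')
    have : (-(1/2) : ℝ) - 1 = -(3/2) := by norm_num
    rw [this] at h2
    exact h2
  have hDg1 : ∀ x ∈ I, HasDerivAt g1 0 x := by
    intro x hx
    have h1 : HasDerivAt (fun y => s * f2 y * (-(1/2))) (s * f3 x * (-(1/2))) x :=
      ((hf3 x hx).hasDerivAt.const_mul s).mul_const _
    have h2' : HasDerivAt (fun y => s * f1 y) (s * f2 x) x := (hf2 x hx).hasDerivAt.const_mul s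
    have h2 := h2'.rpow_const (p := -(3/2)) (Or.inl (hspos x hx).ne')
    have e32 : (-(3/2) : ℝ) - 1 = -(5/2) := by norm_num
    rw [e32] at h2
    have h3 := h1.mul h2
    have hval : s * f3 x * (-(1/2)) * (s * f1 x) ^ (-(3/2) : ℝ) +
        s * f2 x * (-(1/2)) * (s * f2 x * (-(3/2)) * (s * f1 x) ^ (-(5/2) : ℝ)) = 0 := by
      set t := s * f1 x with ht
      have htpos : 0 < t := hspos x hx
      have hkey : t ^ (-(3/2) : ℝ) = t ^ (-(5/2) : ℝ) * t := by
        rw [← Real.rpow_add_one htpos.ne']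
        norm_num
      rw [hkey]
      have hst : s * t = f1 x := by rw [ht]; linear_combination f1 x * hs2
      have hODEx := hODE x hx
      linear_combination (-(1/2) * f3 x * t ^ (-(5/2) : ℝ)) * hst +
        ((3/4) * f2 x ^ 2 * t ^ (-(5/2) : ℝ)) * hs2 + (-(1/2) * t ^ (-(5/2) : ℝ)) * hODEx
    rw [← hval]
    exact h3
  -- g1 is constant c₀
  set c₀ := g1 x₀ with hc₀
  have hg1const : ∀ x ∈ I, g1 x = c₀ := fun x hx => constOn hIopen hIconn hDg1 x hx x₀ hx₀
  -- g x - c₀ x is constant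
  set d₀ := g x₀ - c₀ * x₀ with hd₀
  have hgaff : ∀ x ∈ I, g x = c₀ * x + d₀ := by
    have hD : ∀ x ∈ I, HasDerivAt (fun y => g y - c₀ * y) 0 x := by
      intro x hx
      have := (hDg x hx).sub ((hasDerivAt_id x).const_mul c₀)
      rw [hg1const x hx] at this
      exact this.congr_deriv (by ring)
    intro x hx
    have := constOn hIopen hIconn hD x hx x₀ hx₀
    linarith [this]
  have hupos : ∀ x ∈ I, 0 < c₀ * x + d₀ := by
    intro x hx
    rw [← hgaff x hx]
    exact Real.rpow_pos_of_pos (hspos x hx) _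
  -- f1 x = s / (c₀ x + d₀)^2
  have hf1eq : ∀ x ∈ I, f1 x = s / (c₀ * x + d₀) ^ 2 := by
    intro x hx
    have h1 := hgaff x hx
    have htpos := hspos x hx
    have h2 : (s * f1 x) ^ ((-(1/2) : ℝ) * 2) = (c₀ * x + d₀) ^ 2 := by
      rw [Real.rpow_mul htpos.le, ← h1]
      rw [hg]
      norm_num
    rw [show ((-(1/2) : ℝ) * 2) = -1 by norm_num, Real.rpow_neg_one] at h2
    have hne : s * f1 x ≠ 0 := htpos.ne'
    have h3 : s * f1 x = ((c₀ * x + d₀) ^ 2)⁻¹ := by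
      rw [← h2, inv_inv]
    have : s * (s * f1 x) = s * ((c₀ * x + d₀) ^ 2)⁻¹ := by rw [h3]
    calc f1 x = s * (s * f1 x) := by linear_combination (-(f1 x)) * hs2
      _ = s / (c₀ * x + d₀) ^ 2 := by rw [h3]; rw [div_eq_mul_inv]
  by_cases hc : c₀ = 0
  · -- linear case
    have hd0 : d₀ ≠ 0 := by
      have := hupos x₀ hx₀
      rw [hc] at this; simp at this; linarith
    set a := s / d₀ ^ 2 with ha
    have hD : ∀ x ∈ I, HasDerivAt (fun y => f y - a * y) 0 x := by
      intro x hx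
      have hdf : DifferentiableAt ℝ f x := by
        by_contra hdiff
        exact hf' x hx (by rw [hf1d, deriv_zero_of_not_differentiableAt hdiff])
      have h1 : HasDerivAt f (f1 x) x := hdf.hasDerivAt
      have := h1.sub ((hasDerivAt_id x).const_mul a)
      rw [hf1eq x hx, hc] at this
      simp only [zero_mul, zero_add] at this
      rw [ha] at this
      exact this.congr_deriv (by ring)
    set b := f x₀ - a * x₀ with hb
    refine ⟨a, b, 0, 1, ?_, fun x _ => by norm_num, fun x hx => ?_⟩
    · have : a ≠ 0 := by
        rw [ha]
        refine div_ne_zero ?_ (pow_ne_zero 2 hd0)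
        intro h; rw [h] at hs2; simp at hs2
      simpa using this
    · have := constOn hIopen hIconn hD x hx x₀ hx₀
      have hfx : f x = a * x + b := by rw [hb]; linarith
      rw [hfx]; norm_num
  · -- genuine Möbius case
    have hudne : ∀ x ∈ I, c₀ * (c₀ * x + d₀) ≠ 0 := fun x hx =>
      mul_ne_zero hc (hupos x hx).ne'
    have hD : ∀ x ∈ I, HasDerivAt (fun y => f y + s / (c₀ * (c₀ * y + d₀))) 0 x := by
      intro x hx
      have hdf : DifferentiableAt ℝ f x := by
        by_contra hdiff
        exact hf' x hx (by rw [hf1d, deriv_zero_of_not_differentiableAt hdiff])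
      have h1 : HasDerivAt f (f1 x) x := hdf.hasDerivAt
      have hden : HasDerivAt (fun y => c₀ * (c₀ * y + d₀)) (c₀ * c₀) x := by
        have : HasDerivAt (fun y => c₀ * y + d₀) c₀ x := by
          simpa using ((hasDerivAt_id x).const_mul c₀).add_const d₀
        simpa using this.const_mul c₀
      have h2 : HasDerivAt (fun y => s / (c₀ * (c₀ * y + d₀)))
          ((0 * (c₀ * (c₀ * x + d₀)) - s * (c₀ * c₀)) / (c₀ * (c₀ * x + d₀)) ^ 2) x :=
        (hasDerivAt_const x s).div hden (hudne x hx)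
      have h3 := h1.add h2
      have hval : f1 x + (0 * (c₀ * (c₀ * x + d₀)) - s * (c₀ * c₀)) / (c₀ * (c₀ * x + d₀)) ^ 2 = 0 := by
        rw [hf1eq x hx]
        have h4 : (c₀ * x + d₀) ≠ 0 := (hupos x hx).ne'
        field_simp
        ring
      rw [hval] at h3
      exact h3
    set e := f x₀ + s / (c₀ * (c₀ * x₀ + d₀)) with heq
    have hfe : ∀ x ∈ I, f x = e - s / (c₀ * (c₀ * x + d₀)) := by
      intro x hx
      have := constOn hIopen hIconn hD x hx x₀ hx₀
      rw [heq]; linarith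
    refine ⟨e * c₀ ^ 2, e * c₀ * d₀ - s, c₀ ^ 2, c₀ * d₀, ?_, fun x hx => ?_, fun x hx => ?_⟩
    · intro h
      have hsc : s * c₀ ^ 2 = 0 := by linear_combination h
      have hs0 : s ≠ 0 := by intro h'; rw [h'] at hs2; simp at hs2
      rcases mul_eq_zero.mp hsc with h' | h'
      · exact hs0 h'
      · exact hc (by nlinarith [h'])
    · have := hudne x hx
      intro h; apply this; linear_combination h
    · rw [hfe x hx]
      have hden2 : c₀ ^ 2 * x + c₀ * d₀ ≠ 0 := by
        intro h; exact hudne x hx (by linear_combination h)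
      rw [eq_div_iff hden2]
      have hcan : s / (c₀ * (c₀ * x + d₀)) * (c₀ * (c₀ * x + d₀)) = s :=
        div_mul_cancel₀ s (hudne x hx)
      have hexp : (e - s / (c₀ * (c₀ * x + d₀))) * (c₀ ^ 2 * x + c₀ * d₀)
          = e * (c₀ ^ 2 * x + c₀ * d₀) - s / (c₀ * (c₀ * x + d₀)) * (c₀ * (c₀ * x + d₀)) := by
        ring
      rw [hexp, hcan]
      ring

lemma mobius_schwarzian (I : Set ℝ) (hIopen : IsOpen I)
    (f : ℝ → ℝ) (a b c d : ℝ) (habcd : a * d ≠ b * c)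
    (hden : ∀ x ∈ I, c * x + d ≠ 0)
    (hfx : ∀ x ∈ I, f x = (a * x + b) / (c * x + d)) :
    ∀ x ∈ I, schwarzian f x = 0 := by
  set e := a * d - b * c with he
  have he0 : e ≠ 0 := sub_ne_zero.mpr habcd
  set G1 : ℝ → ℝ := fun x => e / (c * x + d) ^ 2 with hG1
  set G2 : ℝ → ℝ := fun x => -2 * c * e / (c * x + d) ^ 3 with hG2
  set G3 : ℝ → ℝ := fun x => 6 * c ^ 2 * e / (c * x + d) ^ 4 with hG3
  -- basic derivative of denominator
  have hdc : ∀ x : ℝ, HasDerivAt (fun y => c * y + d) c x := by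
    intro x
    simpa using ((hasDerivAt_id x).const_mul c).add_const d
  have hD1 : ∀ x ∈ I, HasDerivAt f (G1 x) x := by
    intro x hx
    have hF : HasDerivAt (fun y => (a * y + b) / (c * y + d))
        ((a * (c * x + d) - (a * x + b) * c) / (c * x + d) ^ 2) x := by
      have hn : HasDerivAt (fun y => a * y + b) a x := by
        simpa using ((hasDerivAt_id x).const_mul a).add_const b
      exact hn.div (hdc x) (hden x hx)
    have heq : (a * (c * x + d) - (a * x + b) * c) / (c * x + d) ^ 2 = G1 x := by
      rw [hG1]; field_simp; ring
    rw [heq] at hF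
    apply hF.congr_of_eventuallyEq
    filter_upwards [hIopen.mem_nhds hx] with y hy using hfx y hy
  have hderiv1 : ∀ x ∈ I, deriv f x = G1 x := fun x hx => (hD1 x hx).deriv
  have hD2 : ∀ x ∈ I, HasDerivAt (deriv f) (G2 x) x := by
    intro x hx
    have hF : HasDerivAt G1 ((0 * (c * x + d) ^ 2 - e * (2 * (c * x + d) ^ 1 * c)) / ((c * x + d) ^ 2) ^ 2) x := by
      exact (hasDerivAt_const x e).div ((hdc x).pow 2) (pow_ne_zero 2 (hden x hx))
    have heq : (0 * (c * x + d) ^ 2 - e * (2 * (c * x + d) ^ 1 * c)) / ((c * x + d) ^ 2) ^ 2 = G2 x := by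
      rw [hG2, div_eq_div_iff (pow_ne_zero 2 (pow_ne_zero 2 (hden x hx))) (pow_ne_zero 3 (hden x hx))]; ring
    rw [heq] at hF
    apply hF.congr_of_eventuallyEq
    filter_upwards [hIopen.mem_nhds hx] with y hy using hderiv1 y hy
  have hderiv2 : ∀ x ∈ I, deriv (deriv f) x = G2 x := fun x hx => (hD2 x hx).deriv
  have hD3 : ∀ x ∈ I, HasDerivAt (deriv (deriv f)) (G3 x) x := by
    intro x hx
    have hF : HasDerivAt G2 ((0 * (c * x + d) ^ 3 - (-2 * c * e) * (3 * (c * x + d) ^ 2 * c)) / ((c * x + d) ^ 3) ^ 2) x := by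
      exact (hasDerivAt_const x (-2 * c * e)).div ((hdc x).pow 3) (pow_ne_zero 3 (hden x hx))
    have heq : (0 * (c * x + d) ^ 3 - (-2 * c * e) * (3 * (c * x + d) ^ 2 * c)) / ((c * x + d) ^ 3) ^ 2 = G3 x := by
      rw [hG3, div_eq_div_iff (pow_ne_zero 2 (pow_ne_zero 3 (hden x hx))) (pow_ne_zero 4 (hden x hx))]; ring
    rw [heq] at hF
    apply hF.congr_of_eventuallyEq
    filter_upwards [hIopen.mem_nhds hx] with y hy using hderiv2 y hy
  have hderiv3 : ∀ x ∈ I, deriv (deriv (deriv f)) x = G3 x := fun x hx => (hD3 x hx).deriv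
  intro x hx
  rw [schwarzian, hderiv1 x hx, hderiv2 x hx, hderiv3 x hx, hG1, hG2, hG3]
  have h0 := hden x hx
  field_simp
  ring

theorem stmt3 (I : Set ℝ) (hIopen : IsOpen I) (hIne : I.Nonempty) (hIconn : I.OrdConnected)
    (f : ℝ → ℝ)
    (hf1 : ∀ x ∈ I, DifferentiableAt ℝ f x)
    (hf2 : ∀ x ∈ I, DifferentiableAt ℝ (deriv f) x)
    (hf3 : ∀ x ∈ I, DifferentiableAt ℝ (deriv (deriv f)) x)
    (hf' : ∀ x ∈ I, deriv f x ≠ 0) :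
    (∀ x ∈ I, schwarzian f x = 0) ↔
    (∃ a b c d : ℝ, a * d ≠ b * c ∧ (∀ x ∈ I, c * x + d ≠ 0) ∧
      ∀ x ∈ I, f x = (a * x + b) / (c * x + d)) := by
  constructor
  · exact schwarzian_mobius I hIopen hIne hIconn f hf2 hf3 hf'
  · rintro ⟨a, b, c, d, habcd, hden, hfx⟩
    exact mobius_schwarzian I hIopen f a b c d habcd hden hfx
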